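/- Let E be a complex Hilbert space, let H be a bounded selfadjoint invertible operator on E, and let P be a finite-rank orthogonal projection on E. Then for every ε > 0 there exists a bounded selfadjoint operator H̃ on E such that: (i) H − H̃ has finite rank; (ii) ‖H − H̃‖ ≤ ε; (iii) the compression of H̃ to the range of P (i.e., the restriction of PH̃P to Ran(P), as a linear endomorphism of Ran(P)) is invertible, and the compression of H̃ to the orthogonal complement of Ran(P) (i.e., the restriction of (1−P)H̃(1−P) to Ran(P)^⊥) is invertible. -/

import Mathlib

open Submodule

lemma aux_isClosed_sup {E : Type*} [NormedAddCommGroup E] [InnerProductSpace ℂ E] [CompleteSpace E]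
    (W V : Submodule ℂ E) (hW : IsClosed (W : Set E)) [FiniteDimensional ℂ V] :
    IsClosed ((W ⊔ V : Submodule ℂ E) : Set E) := by
  haveI : CompleteSpace W := hW.completeSpace_coe
  set Q : E →L[ℂ] E := ContinuousLinearMap.id ℂ E - W.subtypeL.comp (orthogonalProjection W)
    with hQdef
  have hQw : ∀ w ∈ W, Q w = 0 := by
    intro w hw
    simp only [hQdef, ContinuousLinearMap.sub_apply, ContinuousLinearMap.id_apply,
      ContinuousLinearMap.comp_apply, Submodule.subtypeL_apply, sub_eq_zero]
    exact (Submodule.starProjection_eq_self_iff.2 hw).symm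
  have hQx : ∀ x : E, x - Q x ∈ W := by
    intro x
    simp only [hQdef, ContinuousLinearMap.sub_apply, ContinuousLinearMap.id_apply,
      ContinuousLinearMap.comp_apply, Submodule.subtypeL_apply, sub_sub_cancel]
    exact Submodule.coe_mem _
  have key : (W ⊔ V : Submodule ℂ E) = Submodule.comap (Q : E →ₗ[ℂ] E) (V.map (Q : E →ₗ[ℂ] E)) := by
    apply le_antisymm
    · apply sup_le
      · intro w hw
        refine Submodule.mem_comap.2 ?_
        have : (Q : E →ₗ[ℂ] E) w = 0 := hQw w hw
        rw [this]
        exact Submodule.zero_mem _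
      · intro v hv
        exact Submodule.mem_comap.2 (Submodule.mem_map_of_mem hv)
    · intro x hx
      obtain ⟨v, hv, hvx⟩ := Submodule.mem_comap.1 hx
      have h1 : x = (x - Q x) + ((Q : E →ₗ[ℂ] E) v) := by
        rw [hvx]; simp only [ContinuousLinearMap.coe_coe]; abel
      have h2 : (Q : E →ₗ[ℂ] E) v = v - (v - Q v) := by simp
      rw [h1, h2]
      refine Submodule.add_mem _ (Submodule.mem_sup_left (hQx x)) ?_
      exact Submodule.sub_mem _ (Submodule.mem_sup_right hv) (Submodule.mem_sup_left (hQx v))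
  rw [key]
  have : IsClosed ((V.map (Q : E →ₗ[ℂ] E) : Submodule ℂ E) : Set E) :=
    Submodule.closed_of_finiteDimensional _
  exact this.preimage Q.continuous

lemma aux_proj_apply_norm_le {E : Type*} [NormedAddCommGroup E] [InnerProductSpace ℂ E]
    [CompleteSpace E] (P : E →L[ℂ] E) (hP : IsSelfAdjoint P) (hP2 : P * P = P) (x : E) :
    ‖P x‖ ≤ ‖x‖ := by
  have hPP : P (P x) = P x := by
    have := congrArg (fun T : E →L[ℂ] E => T x) hP2
    simpa using this
  have h2 : (inner ℂ (P x) (P x) : ℂ) = inner ℂ x (P x) := by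
    have h := hP.isSymmetric x (P x)
    simpa [hPP] using h
  have h1 : ‖P x‖ ^ 2 = RCLike.re (inner ℂ x (P x) : ℂ) := by
    rw [← h2, inner_self_eq_norm_sq]
  have h3 : RCLike.re (inner ℂ x (P x) : ℂ) ≤ ‖x‖ * ‖P x‖ := by
    calc RCLike.re (inner ℂ x (P x) : ℂ) ≤ ‖(inner ℂ x (P x) : ℂ)‖ := RCLike.re_le_norm _
    _ ≤ ‖x‖ * ‖P x‖ := norm_inner_le_norm _ _
  rcases eq_or_lt_of_le (norm_nonneg (P x)) with h | h
  · rw [← h]; exact norm_nonneg x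
  · have : ‖P x‖ * ‖P x‖ ≤ ‖x‖ * ‖P x‖ := by
      calc ‖P x‖ * ‖P x‖ = ‖P x‖ ^ 2 := (sq ‖P x‖).symm
      _ ≤ ‖x‖ * ‖P x‖ := h1 ▸ h3
    exact le_of_mul_le_mul_right this h



set_option maxHeartbeats 2000000 in
/-- Lemma 7.2 (lem-HDecop2): given a bounded selfadjoint invertible `H` and a finite-rank
orthogonal projection `P`, for every `ε > 0` there is a selfadjoint `H̃` differing from `H` by
a finite-rank operator of norm at most `ε` such that both the compression of `H̃` to `Ran(P)`
(the restriction of `PH̃P`) and the compression of `H̃` to `Ran(P)ᗮ` (the restriction of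
`(1−P)H̃(1−P)`) are invertible. -/
theorem small_finite_rank_perturbation_compressions_invertible {E : Type*}
    [NormedAddCommGroup E] [InnerProductSpace ℂ E] [CompleteSpace E]
    (H P : E →L[ℂ] E) (hH : IsSelfAdjoint H) (hHinv : IsUnit H)
    (hP : IsSelfAdjoint P) (hP2 : P * P = P)
    (hPfin : FiniteDimensional ℂ (LinearMap.range (P : E →ₗ[ℂ] E))) :
    ∀ ε > (0 : ℝ), ∃ Ht : E →L[ℂ] E, IsSelfAdjoint Ht ∧
      FiniteDimensional ℂ (LinearMap.range ((H - Ht : E →L[ℂ] E) : E →ₗ[ℂ] E)) ∧ ‖H - Ht‖ ≤ ε ∧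
      (∃ h₁ : ∀ x ∈ LinearMap.range (P : E →ₗ[ℂ] E),
          (((P * Ht * P : E →L[ℂ] E) : E →ₗ[ℂ] E)) x ∈ LinearMap.range (P : E →ₗ[ℂ] E),
        IsUnit (LinearMap.restrict (((P * Ht * P : E →L[ℂ] E) : E →ₗ[ℂ] E)) h₁)) ∧
      (∃ h₂ : ∀ x ∈ (LinearMap.range (P : E →ₗ[ℂ] E))ᗮ,
          ((((1 - P) * Ht * (1 - P) : E →L[ℂ] E) : E →ₗ[ℂ] E)) x ∈ (LinearMap.range (P : E →ₗ[ℂ] E))ᗮ,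
        IsUnit (LinearMap.restrict ((((1 - P) * Ht * (1 - P) : E →L[ℂ] E) : E →ₗ[ℂ] E)) h₂)) := by
  intro ε hε
  classical
  set V : Submodule ℂ E := LinearMap.range (P : E →ₗ[ℂ] E) with hV
  set X : Submodule ℂ E := Vᗮ with hX
  haveI : FiniteDimensional ℂ V := hPfin
  haveI : CompleteSpace V := FiniteDimensional.complete ℂ V
  -- basic facts about P
  have hPidem : ∀ y : E, P (P y) = P y := fun y => by
    have := congrArg (fun T : E →L[ℂ] E => T y) hP2
    simpa using this
  have hPmem : ∀ v ∈ V, P v = v := by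
    rintro v ⟨y, rfl⟩; exact hPidem y
  have hPX : ∀ x ∈ X, P x = 0 := by
    intro x hx
    have h0 : (inner ℂ (P x) x : ℂ) = 0 := (Submodule.mem_orthogonal V x).1 hx (P x) ⟨x, rfl⟩
    have h1 : (inner ℂ (P x) (P x) : ℂ) = inner ℂ x (P x) := by
      simpa [hPidem] using hP.isSymmetric x (P x)
    have h2 : (inner ℂ x (P x) : ℂ) = 0 := by
      rw [← inner_conj_symm, h0, map_zero]
    exact inner_self_eq_zero.1 (h1.trans h2)
  set Q : E →L[ℂ] E := 1 - P with hQdef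
  have hQapp : ∀ y : E, Q y = y - P y := fun y => rfl
  have hQsa : IsSelfAdjoint Q := (IsSelfAdjoint.one (R := E →L[ℂ] E)).sub hP
  have hQX : ∀ y : E, Q y ∈ X := by
    intro y
    refine (Submodule.mem_orthogonal V (Q y)).2 ?_
    intro u hu
    rw [hQapp, inner_sub_right]
    have : (inner ℂ u (P y) : ℂ) = inner ℂ (P u) y := (hP.isSymmetric u y).symm
    rw [this, hPmem u hu, sub_self]
  have hQx : ∀ x ∈ X, Q x = x := by
    intro x hx; rw [hQapp, hPX x hx, sub_zero]
  have hQzero : ∀ v ∈ V, Q v = 0 := by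
    intro v hv; rw [hQapp, hPmem v hv, sub_self]
  -- injectivity of H
  obtain ⟨u, hu⟩ := hHinv
  have hHinj : Function.Injective (H : E → E) := by
    intro a b hab
    have h1 : (↑u⁻¹ * ↑u : E →L[ℂ] E) a = (↑u⁻¹ * ↑u : E →L[ℂ] E) b := by
      simp only [ContinuousLinearMap.mul_apply, hu, hab]
    simpa [u.inv_mul] using h1
  -- the kernel of the compression to X
  set K' : Submodule ℂ E := X ⊓ LinearMap.ker ((Q ∘L H : E →L[ℂ] E) : E →ₗ[ℂ] E) with hK'def
  have hK'X : K' ≤ X := inf_le_left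
  have hK'mem : ∀ k, k ∈ K' ↔ k ∈ X ∧ Q (H k) = 0 := by
    intro k
    constructor
    · rintro ⟨h1, h2⟩; exact ⟨h1, h2⟩
    · rintro ⟨h1, h2⟩; exact ⟨h1, h2⟩
  have hK'H : ∀ k ∈ K', H k ∈ V := by
    intro k hk
    have h2 : Q (H k) = 0 := ((hK'mem k).1 hk).2
    rw [hQapp, sub_eq_zero] at h2
    exact h2 ▸ ⟨H k, rfl⟩
  haveI hK'fin : FiniteDimensional ℂ K' := by
    have f : K' →ₗ[ℂ] V :=
      LinearMap.codRestrict V ((H : E →ₗ[ℂ] E).comp K'.subtype) (fun c => hK'H c c.2)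
    refine FiniteDimensional.of_injective
      (LinearMap.codRestrict V ((H : E →ₗ[ℂ] E).comp K'.subtype) (fun c => hK'H c c.2)) ?_
    intro a b hab
    have : H (a : E) = H (b : E) := by
      have := congrArg (fun z : V => (z : E)) hab
      exact this
    exact Subtype.ext (hHinj this)
  haveI : CompleteSpace K' := FiniteDimensional.complete ℂ K'
  set Pi : E →L[ℂ] E := K'.subtypeL.comp (orthogonalProjection K') with hPidef
  have hPimem : ∀ y : E, Pi y ∈ K' := fun y => Submodule.coe_mem _
  have hPiid : ∀ k ∈ K', Pi k = k := by
    intro k hk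
    exact Submodule.starProjection_eq_self_iff.2 hk
  have hPisa : IsSelfAdjoint Pi := isSelfAdjoint_starProjection K'
  have hPi2 : Pi * Pi = Pi := by
    ext y
    exact hPiid (Pi y) (hPimem y)
  -- T₁ and δ₁
  have h₀ : ∀ x ∈ V, ((P * H * P : E →L[ℂ] E) : E →ₗ[ℂ] E) x ∈ V := by
    intro x hx
    exact ⟨H (P x), rfl⟩
  set T₁ : Module.End ℂ V := LinearMap.restrict ((P * H * P : E →L[ℂ] E) : E →ₗ[ℂ] E) h₀
    with hT₁def
  obtain ⟨δ₁, hδ₁⟩ : ∃ δ₁ : ℝ, δ₁ ∈ Set.Ioc 0 (ε / 2) \ {t : ℝ | (-t : ℂ) ∈ spectrum ℂ T₁} := by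
    have hfin : (spectrum ℂ T₁).Finite := Module.End.finite_spectrum T₁
    have hfin2 : {t : ℝ | (-t : ℂ) ∈ spectrum ℂ T₁}.Finite := by
      refine Set.Finite.preimage ?_ hfin
      intro a _ b _ h
      have : (a : ℂ) = b := by
        have := neg_inj.1 h
        exact_mod_cast this
      exact_mod_cast this
    exact ((Set.Ioc_infinite (by linarith : (0:ℝ) < ε / 2)).diff hfin2).nonempty
  obtain ⟨⟨hδ₁pos, hδ₁le⟩, hδ₁spec⟩ := hδ₁
  simp only [Set.mem_setOf_eq] at hδ₁spec
  set δ₂ : ℝ := ε / 2 with hδ₂def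
  have hδ₂pos : 0 < δ₂ := by rw [hδ₂def]; linarith
  set Ht : E →L[ℂ] E := H + (δ₁ : ℂ) • P + (δ₂ : ℂ) • Pi with hHtdef
  have hHtapp : ∀ y : E, Ht y = H y + (δ₁ : ℂ) • P y + (δ₂ : ℂ) • Pi y := fun y => rfl
  refine ⟨Ht, ?_, ?_, ?_, ?_, ?_⟩
  · -- selfadjoint
    have hstar1 : star (δ₁ : ℂ) = (δ₁ : ℂ) := by simp [Complex.star_def, Complex.conj_ofReal]
    have hstar2 : star (δ₂ : ℂ) = (δ₂ : ℂ) := by simp [Complex.star_def, Complex.conj_ofReal]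
    exact (hH.add (IsSelfAdjoint.smul hstar1 hP)).add (IsSelfAdjoint.smul hstar2 hPisa)
  · -- finite rank
    have hle : LinearMap.range ((H - Ht : E →L[ℂ] E) : E →ₗ[ℂ] E) ≤ V ⊔ K' := by
      rintro _ ⟨y, rfl⟩
      have : (H - Ht) y = -((δ₁ : ℂ) • P y) - (δ₂ : ℂ) • Pi y := by
        simp only [ContinuousLinearMap.sub_apply, hHtapp]
        abel
      rw [ContinuousLinearMap.coe_coe, this]
      refine Submodule.sub_mem _ (Submodule.neg_mem _ ?_) ?_
      · exact Submodule.mem_sup_left (Submodule.smul_mem _ _ ⟨y, rfl⟩)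
      · exact Submodule.mem_sup_right (Submodule.smul_mem _ _ (hPimem y))
    exact Submodule.finiteDimensional_of_le hle
  · -- norm bound
    have heq : H - Ht = -((δ₁ : ℂ) • P) - (δ₂ : ℂ) • Pi := by
      rw [hHtdef]; abel
    have hPnorm : ‖(δ₁ : ℂ) • P‖ ≤ δ₁ := by
      rw [norm_smul]
      have h1 : ‖(δ₁ : ℂ)‖ = δ₁ := by
        rw [Complex.norm_real, Real.norm_of_nonneg hδ₁pos.le]
      rw [h1]
      have h2 : ‖P‖ ≤ 1 :=
        ContinuousLinearMap.opNorm_le_bound P zero_le_one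
          (fun x => by simpa using aux_proj_apply_norm_le P hP hP2 x)
      nlinarith [norm_nonneg P]
    have hPinorm : ‖(δ₂ : ℂ) • Pi‖ ≤ δ₂ := by
      rw [norm_smul]
      have h1 : ‖(δ₂ : ℂ)‖ = δ₂ := by
        rw [Complex.norm_real, Real.norm_of_nonneg hδ₂pos.le]
      rw [h1]
      have h2 : ‖Pi‖ ≤ 1 :=
        ContinuousLinearMap.opNorm_le_bound Pi zero_le_one
          (fun x => by simpa using aux_proj_apply_norm_le Pi hPisa hPi2 x)
      nlinarith [norm_nonneg Pi]
    calc ‖H - Ht‖ = ‖-((δ₁ : ℂ) • P) - (δ₂ : ℂ) • Pi‖ := by rw [heq]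
    _ ≤ ‖-((δ₁ : ℂ) • P)‖ + ‖(δ₂ : ℂ) • Pi‖ := norm_sub_le _ _
    _ = ‖(δ₁ : ℂ) • P‖ + ‖(δ₂ : ℂ) • Pi‖ := by rw [norm_neg]
    _ ≤ δ₁ + δ₂ := add_le_add hPnorm hPinorm
    _ ≤ ε := by rw [hδ₂def]; linarith
  · -- compression to V
    have h₁ : ∀ x ∈ V, ((P * Ht * P : E →L[ℂ] E) : E →ₗ[ℂ] E) x ∈ V := by
      intro x hx
      exact ⟨Ht (P x), rfl⟩
    refine ⟨h₁, ?_⟩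
    have hunit : IsUnit (algebraMap ℂ (Module.End ℂ V) (-δ₁ : ℂ) - T₁) := by
      by_contra hc
      exact hδ₁spec ((spectrum.mem_iff).2 hc)
    have heq : LinearMap.restrict ((P * Ht * P : E →L[ℂ] E) : E →ₗ[ℂ] E) h₁ =
        -(algebraMap ℂ (Module.End ℂ V) (-δ₁ : ℂ) - T₁) := by
      refine LinearMap.ext fun v => Subtype.ext ?_
      have hL : ((P * Ht * P : E →L[ℂ] E) : E →ₗ[ℂ] E) (v : E)
          = P (H (v : E)) + (δ₁ : ℂ) • (v : E) := by
        have h1 : ((P * Ht * P : E →L[ℂ] E) : E →ₗ[ℂ] E) (v : E) = P (Ht (P (v : E))) := rfl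
        rw [h1, hPmem _ v.2, hHtapp]
        rw [map_add, map_add, map_smul, map_smul, hPidem, hPmem _ v.2,
          hPX _ (hK'X (hPimem (v : E))), smul_zero, add_zero]
      have hT : ((T₁ v : V) : E) = P (H (v : E)) := by
        have h1 : ((T₁ v : V) : E) = ((P * H * P : E →L[ℂ] E) : E →ₗ[ℂ] E) (v : E) :=
          LinearMap.restrict_coe_apply _ _ _
        have h2 : ((P * H * P : E →L[ℂ] E) : E →ₗ[ℂ] E) (v : E) = P (H (P (v : E))) := rfl
        rw [h1, h2, hPmem _ v.2]
      have hcoe : ((LinearMap.restrict ((P * Ht * P : E →L[ℂ] E) : E →ₗ[ℂ] E) h₁ v : V) : E)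
          = ((P * Ht * P : E →L[ℂ] E) : E →ₗ[ℂ] E) (v : E) := LinearMap.restrict_coe_apply _ _ _
      rw [hcoe, hL]
      have hR : (((-(algebraMap ℂ (Module.End ℂ V) (-δ₁ : ℂ) - T₁)) v : V) : E)
          = P (H (v : E)) + (δ₁ : ℂ) • (v : E) := by
        have hstep : (-(algebraMap ℂ (Module.End ℂ V) (-δ₁ : ℂ) - T₁)) v
            = T₁ v - (-δ₁ : ℂ) • v := by
          simp only [LinearMap.neg_apply, LinearMap.sub_apply, Module.algebraMap_end_apply,
            neg_sub]
        rw [hstep, AddSubgroupClass.coe_sub, SetLike.val_smul, hT, neg_smul, sub_neg_eq_add]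
      rw [hR]
    rw [heq]
    exact hunit.neg
  · -- compression to X
    have h₂ : ∀ x ∈ X, ((Q * Ht * Q : E →L[ℂ] E) : E →ₗ[ℂ] E) x ∈ X := by
      intro x hx
      exact hQX (Ht (Q x))
    refine ⟨h₂, ?_⟩
    have hcomp : ∀ x ∈ X, Q (Ht (Q x)) = Q (H x) + (δ₂ : ℂ) • Pi x := by
      intro x hx
      rw [hQx x hx, hHtapp, map_add, map_add, map_smul, map_smul, hPX x hx, map_zero, smul_zero,
        add_zero, hQx _ (hK'X (hPimem x))]
    have hQHorth : ∀ x ∈ X, ∀ k ∈ K', (inner ℂ k (Q (H x)) : ℂ) = 0 := by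
      intro x hx k hk
      have h1 : (inner ℂ (Q k) (H x) : ℂ) = inner ℂ k (Q (H x)) := by simpa using hQsa.isSymmetric k (H x)
      rw [← h1, hQx k (hK'X hk)]
      have h2 : (inner ℂ (H k) x : ℂ) = inner ℂ k (H x) := by simpa using hH.isSymmetric k x
      rw [← h2]
      exact (Submodule.mem_orthogonal V x).1 hx (H k) (hK'H k hk)
    have hδ₂ne : (δ₂ : ℂ) ≠ 0 := by
      simp only [ne_eq, Complex.ofReal_eq_zero]
      exact hδ₂pos.ne'
    have hinjcore : ∀ x ∈ X, Q (H x) + (δ₂ : ℂ) • Pi x = 0 → x = 0 := by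
      intro x hx h0
      have hPix : Pi x = 0 := by
        have h1 : (inner ℂ (Pi x) (Q (H x) + (δ₂ : ℂ) • Pi x) : ℂ)
            = (δ₂ : ℂ) * inner ℂ (Pi x) (Pi x) := by
          rw [inner_add_right, hQHorth x hx (Pi x) (hPimem x), inner_smul_right, zero_add]
        rw [h0, inner_zero_right] at h1
        have h2 : (inner ℂ (Pi x) (Pi x) : ℂ) = 0 :=
          (mul_eq_zero.1 h1.symm).resolve_left hδ₂ne
        exact inner_self_eq_zero.1 h2
      have hQH0 : Q (H x) = 0 := by
        rw [hPix, smul_zero, add_zero] at h0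
        exact h0
      have hxK' : x ∈ K' := (hK'mem x).2 ⟨hx, hQH0⟩
      rw [← hPiid x hxK', hPix]
    -- surjectivity machinery
    have hXclosed : IsClosed (X : Set E) := V.isClosed_orthogonal
    have hXoo : Xᗮ = V := Submodule.orthogonal_orthogonal V
    set W : Submodule ℂ E := Submodule.map ((H : E →L[ℂ] E) : E →ₗ[ℂ] E) X with hWdef
    have hWclosed : IsClosed (W : Set E) := by
      have hset : (W : Set E) = (↑u⁻¹ : E →L[ℂ] E) ⁻¹' (X : Set E) := by
        ext y
        constructor
        · rintro ⟨x, hx, rfl⟩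
          have h1 : (↑u⁻¹ : E →L[ℂ] E) (H x) = x := by
            rw [← hu]
            calc (↑u⁻¹ : E →L[ℂ] E) ((↑u : E →L[ℂ] E) x)
                = ((↑u⁻¹ * ↑u : E →L[ℂ] E)) x := rfl
            _ = x := by rw [u.inv_mul]; rfl
          show (↑u⁻¹ : E →L[ℂ] E) (((H : E →L[ℂ] E) : E →ₗ[ℂ] E) x) ∈ (X : Set E)
          simpa [h1] using hx
        · intro hy
          refine ⟨(↑u⁻¹ : E →L[ℂ] E) y, hy, ?_⟩
          show H ((↑u⁻¹ : E →L[ℂ] E) y) = y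
          rw [← hu]
          calc (↑u : E →L[ℂ] E) ((↑u⁻¹ : E →L[ℂ] E) y)
              = ((↑u * ↑u⁻¹ : E →L[ℂ] E)) y := rfl
          _ = y := by rw [u.mul_inv]; rfl
      rw [hset]
      exact hXclosed.preimage (↑u⁻¹ : E →L[ℂ] E).continuous
    set S : Submodule ℂ E := Submodule.map ((Q.comp H : E →L[ℂ] E) : E →ₗ[ℂ] E) X with hSdef
    have hSmem : ∀ s, s ∈ S ↔ ∃ x ∈ X, Q (H x) = s := by
      intro s
      constructor
      · rintro ⟨x, hx, rfl⟩
        exact ⟨x, hx, rfl⟩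
      · rintro ⟨x, hx, rfl⟩
        exact ⟨x, hx, rfl⟩
    have hSclosed : IsClosed (S : Set E) := by
      have hset : (S : Set E) = ((W ⊔ V : Submodule ℂ E) : Set E) ∩ (X : Set E) := by
        ext s
        constructor
        · intro hs
          obtain ⟨x, hx, rfl⟩ := (hSmem s).1 hs
          constructor
          · show Q (H x) ∈ (W ⊔ V : Submodule ℂ E)
            rw [hQapp]
            exact Submodule.sub_mem _ (Submodule.mem_sup_left ⟨x, hx, rfl⟩)
              (Submodule.mem_sup_right ⟨H x, rfl⟩)
          · exact hQX (H x)
        · rintro ⟨hs1, hs2⟩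
          obtain ⟨w', hw', v, hv, rfl⟩ := Submodule.mem_sup.1 hs1
          obtain ⟨x, hx, rfl⟩ := hw'
          refine (hSmem _).2 ⟨x, hx, ?_⟩
          calc Q (H x) = Q (H x) + Q v := by rw [hQzero v hv, add_zero]
          _ = Q (((H : E →L[ℂ] E) : E →ₗ[ℂ] E) x + v) := (map_add Q _ _).symm
          _ = ((H : E →L[ℂ] E) : E →ₗ[ℂ] E) x + v := hQx _ hs2
      rw [hset]
      exact (aux_isClosed_sup W V hWclosed).inter hXclosed
    haveI : CompleteSpace S := hSclosed.completeSpace_coe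
    have hSorthmem : ∀ y, y ∈ Sᗮ ↔ Q y ∈ K' := by
      intro y
      constructor
      · intro hy
        refine (hK'mem _).2 ⟨hQX y, ?_⟩
        have hall : H (Q y) ∈ Xᗮ := by
          refine (Submodule.mem_orthogonal X _).2 ?_
          intro x hx
          have h1 := (Submodule.mem_orthogonal S y).1 hy (Q (H x)) ((hSmem _).2 ⟨x, hx, rfl⟩)
          have e1 : (inner ℂ (H x) (Q y) : ℂ) = inner ℂ x (H (Q y)) := by
            simpa using hH.isSymmetric x (Q y)
          have e2 : (inner ℂ (Q (H x)) y : ℂ) = inner ℂ (H x) (Q y) := by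
            simpa using hQsa.isSymmetric (H x) y
          rw [← e1, ← e2]
          exact h1
        rw [hXoo] at hall
        rw [hQapp, hPmem _ hall, sub_self]
      · intro hQyK
        refine (Submodule.mem_orthogonal S y).2 ?_
        intro s hs
        obtain ⟨x, hx, rfl⟩ := (hSmem s).1 hs
        have e1 : (inner ℂ (Q (H x)) y : ℂ) = inner ℂ (H x) (Q y) := by
          simpa using hQsa.isSymmetric (H x) y
        have e2 : (inner ℂ (H x) (Q y) : ℂ) = inner ℂ x (H (Q y)) := by
          simpa using hH.isSymmetric x (Q y)
        rw [e1, e2]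
        exact (Submodule.mem_orthogonal' V x).1 hx _ (hK'H _ hQyK)
    have hSorth : Sᗮ = V ⊔ K' := by
      apply le_antisymm
      · intro y hy
        have h1 : y = P y + Q y := by rw [hQapp]; abel
        rw [h1]
        exact Submodule.add_mem _ (Submodule.mem_sup_left ⟨y, rfl⟩)
          (Submodule.mem_sup_right ((hSorthmem y).1 hy))
      · apply sup_le
        · intro v hv
          exact (hSorthmem v).2 (by rw [hQzero v hv]; exact K'.zero_mem)
        · intro k hk
          exact (hSorthmem k).2 (by rw [hQx k (hK'X hk)]; exact hk)
    have hSfull : X ⊓ K'ᗮ ≤ S := by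
      have h1 : X ⊓ K'ᗮ ≤ Sᗮᗮ := by
        intro t ht
        refine (Submodule.mem_orthogonal _ t).2 ?_
        intro z hz
        rw [hSorth] at hz
        obtain ⟨v, hv, k, hk, rfl⟩ := Submodule.mem_sup.1 hz
        rw [inner_add_left]
        have e1 : (inner ℂ v t : ℂ) = 0 := (Submodule.mem_orthogonal V t).1 ht.1 v hv
        have e2 : (inner ℂ k t : ℂ) = 0 := (Submodule.mem_orthogonal K' t).1 ht.2 k hk
        rw [e1, e2, add_zero]
      rwa [Submodule.orthogonal_orthogonal S] at h1
    have hQHk : ∀ k ∈ K', Q (H k) = 0 := fun k hk => ((hK'mem k).1 hk).2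
    -- assemble bijectivity
    rw [Module.End.isUnit_iff]
    constructor
    · intro a b hab
      apply Subtype.ext
      have hval : Q (Ht (Q (a : E))) = Q (Ht (Q (b : E))) := by
        have h := congrArg (fun z : X => (z : E)) hab
        have ha : ((LinearMap.restrict ((Q * Ht * Q : E →L[ℂ] E) : E →ₗ[ℂ] E) h₂ a : X) : E)
            = Q (Ht (Q (a : E))) := LinearMap.restrict_coe_apply _ _ _
        have hb : ((LinearMap.restrict ((Q * Ht * Q : E →L[ℂ] E) : E →ₗ[ℂ] E) h₂ b : X) : E)
            = Q (Ht (Q (b : E))) := LinearMap.restrict_coe_apply _ _ _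
        rw [← ha, ← hb]
        exact h
      rw [hcomp _ a.2, hcomp _ b.2] at hval
      have hsub : Q (H ((a : E) - (b : E))) + (δ₂ : ℂ) • Pi ((a : E) - (b : E)) = 0 := by
        have hexp : Q (H ((a : E) - (b : E))) + (δ₂ : ℂ) • Pi ((a : E) - (b : E))
            = (Q (H (a : E)) + (δ₂ : ℂ) • Pi (a : E))
              - (Q (H (b : E)) + (δ₂ : ℂ) • Pi (b : E)) := by
          rw [map_sub, map_sub, map_sub, smul_sub]
          abel
        rw [hexp, hval, sub_self]
      have := hinjcore _ (Submodule.sub_mem X a.2 b.2) hsub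
      exact sub_eq_zero.1 this
    · intro z
      have hw : (z : E) - Pi (z : E) ∈ X ⊓ K'ᗮ := by
        constructor
        · exact Submodule.sub_mem X z.2 (hK'X (hPimem _))
        · exact Submodule.sub_starProjection_mem_orthogonal (K := K') (z : E)
      obtain ⟨x, hxX, hxw⟩ := (hSmem _).1 (hSfull hw)
      set xf : E := x - Pi x + ((δ₂ : ℂ))⁻¹ • Pi (z : E) with hxfdef
      have hxfX : xf ∈ X :=
        Submodule.add_mem X (Submodule.sub_mem X hxX (hK'X (hPimem x)))
          (Submodule.smul_mem X _ (hK'X (hPimem _)))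
      have hQHxf : Q (H xf) = (z : E) - Pi (z : E) := by
        rw [hxfdef, map_add, map_sub, map_smul, map_add, map_sub, map_smul,
          hQHk _ (hPimem x), hQHk _ (hPimem (z : E)), sub_zero, smul_zero, add_zero, hxw]
      have hPixf : Pi xf = ((δ₂ : ℂ))⁻¹ • Pi (z : E) := by
        rw [hxfdef, map_add, map_sub, map_smul, hPiid (Pi x) (hPimem x),
          hPiid (Pi (z : E)) (hPimem _), sub_self, zero_add]
      have hfinal : Q (Ht (Q xf)) = (z : E) := by
        rw [hcomp xf hxfX, hQHxf, hPixf, smul_smul, mul_inv_cancel₀ hδ₂ne, one_smul]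
        exact sub_add_cancel (z : E) (Pi (z : E))
      refine ⟨⟨xf, hxfX⟩, Subtype.ext ?_⟩
      have hc : ((LinearMap.restrict ((Q * Ht * Q : E →L[ℂ] E) : E →ₗ[ℂ] E) h₂ ⟨xf, hxfX⟩ : X) : E)
          = Q (Ht (Q xf)) := LinearMap.restrict_coe_apply _ _ _
      rw [hc]
      exact hfinal
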